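/- Let θ* > 0, let p_{θ*}(y) = (1/(2√(2π)))(e^{−(y−θ*)²/2} + e^{−(y+θ*)²/2}), let q(y;θ) = 1/(1 + e^{2yθ}), and define M₀(θ) = ∫_ℝ (1 − 2 q(y;θ)) y p_{θ*}(y) dy. Then M₀ is twice differentiable on (0, ∞) with M₀''(θ) = −8 ∫_ℝ y³ (e^{yθ} − e^{−yθ}) / (e^{−yθ} + e^{yθ})³ p_{θ*}(y) dy ≤ 0 for every θ > 0; in particular M₀ is concave on (0, ∞). -/

import Mathlib

set_option maxHeartbeats 1000000


open MeasureTheory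

private lemma int_pow_gauss0 (n : ℕ) : Integrable fun x : ℝ => x ^ n * Real.exp (-x ^ 2 / 2) := by
  have h := integrable_rpow_mul_exp_neg_mul_sq (b := (1:ℝ)/2) (by norm_num)
      (s := (n : ℝ)) (by exact_mod_cast neg_one_lt_zero.trans_le (Nat.cast_nonneg n))
  have he : (fun x : ℝ => x ^ (n:ℝ) * Real.exp (-(1/2) * x ^ 2))
      = fun x : ℝ => x ^ n * Real.exp (-x ^ 2 / 2) := by
    funext x
    rw [Real.rpow_natCast]
    congr 1
    ring_nf
  rwa [he] at h

private lemma int_pow_gauss (n : ℕ) (c : ℝ) :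
    Integrable fun y : ℝ => y ^ n * Real.exp (-(y - c) ^ 2 / 2) := by
  have base : Integrable fun u : ℝ => (u + c) ^ n * Real.exp (-u ^ 2 / 2) := by
    have he : (fun u : ℝ => (u + c) ^ n * Real.exp (-u ^ 2 / 2))
        = fun u => ∑ k ∈ Finset.range (n + 1),
            (c ^ (n - k) * (n.choose k : ℝ)) * (u ^ k * Real.exp (-u ^ 2 / 2)) := by
      funext u
      rw [add_pow, Finset.sum_mul]
      refine Finset.sum_congr rfl fun k _ => by ring
    rw [he]
    exact integrable_finset_sum _ fun k _ => (int_pow_gauss0 k).const_mul _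
  have h2 := base.comp_sub_right c
  simpa using h2

private lemma aux_exp_deriv (y θ : ℝ) :
    HasDerivAt (fun t : ℝ => Real.exp (2 * y * t)) (2 * y * Real.exp (2 * y * θ)) θ := by
  have h : HasDerivAt (fun t : ℝ => 2 * y * t) (2 * y) θ := by
    simpa using (hasDerivAt_id θ).const_mul (2 * y)
  simpa [mul_comm] using h.exp

private lemma aux_hne (y θ : ℝ) : (1 : ℝ) + Real.exp (2 * y * θ) ≠ 0 := by positivity

private lemma aux_F_deriv (c y θ : ℝ) :
    HasDerivAt (fun t : ℝ => (1 - 2 * (1 / (1 + Real.exp (2 * y * t)))) * y * c)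
      (4 * y ^ 2 * Real.exp (2 * y * θ) / (1 + Real.exp (2 * y * θ)) ^ 2 * c) θ := by
  have hden : HasDerivAt (fun t : ℝ => 1 + Real.exp (2 * y * t))
      (2 * y * Real.exp (2 * y * θ)) θ := (aux_exp_deriv y θ).const_add 1
  have h2 := (((hden.inv (aux_hne y θ)).const_mul (2 : ℝ)).const_sub 1).mul_const (y * c)
  have hfun : (fun t : ℝ => (1 - 2 * (1 + Real.exp (2 * y * t))⁻¹) * (y * c))
      = fun t : ℝ => (1 - 2 * (1 / (1 + Real.exp (2 * y * t)))) * y * c := by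
    funext t; rw [one_div]; ring
  simp only [Pi.inv_apply] at h2
  rw [hfun] at h2
  refine h2.congr_deriv ?_
  have hE := Real.exp_pos (2 * y * θ)
  field_simp
  ring

private lemma aux_G_deriv (c y θ : ℝ) :
    HasDerivAt (fun t : ℝ => 4 * y ^ 2 * Real.exp (2 * y * t) / (1 + Real.exp (2 * y * t)) ^ 2 * c)
      (8 * y ^ 3 * Real.exp (2 * y * θ) * (1 - Real.exp (2 * y * θ)) /
        (1 + Real.exp (2 * y * θ)) ^ 3 * c) θ := by
  have hden : HasDerivAt (fun t : ℝ => 1 + Real.exp (2 * y * t))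
      (2 * y * Real.exp (2 * y * θ)) θ := (aux_exp_deriv y θ).const_add 1
  have hnum : HasDerivAt (fun t : ℝ => 4 * y ^ 2 * Real.exp (2 * y * t))
      (4 * y ^ 2 * (2 * y * Real.exp (2 * y * θ))) θ := (aux_exp_deriv y θ).const_mul _
  have hden2 := hden.pow 2
  have hdiv := (hnum.div hden2 (pow_ne_zero 2 (aux_hne y θ))).mul_const c
  refine hdiv.congr_deriv ?_
  have hE := Real.exp_pos (2 * y * θ)
  simp only [Pi.pow_apply]
  field_simp
  ring

private lemma aux_normF_le (py y θ : ℝ) (hpy : 0 ≤ py) :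
    ‖(1 - 2 * (1 / (1 + Real.exp (2 * y * θ)))) * y * py‖ ≤ |y| ^ 1 * py := by
  have hE := Real.exp_pos (2 * y * θ)
  have h2 : (0:ℝ) < 1 + Real.exp (2 * y * θ) := by positivity
  have h3 : 1 / (1 + Real.exp (2 * y * θ)) ≤ 1 := by
    rw [div_le_one h2]; linarith
  have h4 : 0 ≤ 1 / (1 + Real.exp (2 * y * θ)) := by positivity
  have h1 : |1 - 2 * (1 / (1 + Real.exp (2 * y * θ)))| ≤ 1 :=
    abs_le.mpr ⟨by linarith, by linarith⟩
  rw [Real.norm_eq_abs, abs_mul, abs_mul, abs_of_nonneg hpy, pow_one]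
  calc |1 - 2 * (1 / (1 + Real.exp (2 * y * θ)))| * |y| * py
      ≤ 1 * |y| * py := by
        apply mul_le_mul_of_nonneg_right _ hpy
        exact mul_le_mul_of_nonneg_right h1 (abs_nonneg y)
    _ = |y| * py := by ring

private lemma aux_normG_le (py y θ : ℝ) (hpy : 0 ≤ py) :
    ‖4 * y ^ 2 * Real.exp (2 * y * θ) / (1 + Real.exp (2 * y * θ)) ^ 2 * py‖
      ≤ |y| ^ 2 * py := by
  have hE := Real.exp_pos (2 * y * θ)
  set E := Real.exp (2 * y * θ) with hEdef
  have hEn : (0:ℝ) < 1 + E := by positivity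
  rw [Real.norm_eq_abs, abs_of_nonneg (by positivity), sq_abs]
  have key : 4 * y ^ 2 * E / (1 + E) ^ 2 ≤ y ^ 2 := by
    rw [div_le_iff₀ (by positivity)]
    nlinarith [mul_nonneg (sq_nonneg y) (sq_nonneg (1 - E))]
  exact mul_le_mul_of_nonneg_right key hpy

private lemma aux_normH_le (py y θ : ℝ) (hpy : 0 ≤ py) :
    ‖8 * y ^ 3 * Real.exp (2 * y * θ) * (1 - Real.exp (2 * y * θ)) /
        (1 + Real.exp (2 * y * θ)) ^ 3 * py‖
      ≤ 2 * (|y| ^ 3 * py) := by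
  have hE := Real.exp_pos (2 * y * θ)
  set E := Real.exp (2 * y * θ) with hEdef
  have hEn : (0:ℝ) < 1 + E := by positivity
  have hy3 : (0:ℝ) ≤ |y| ^ 3 := by positivity
  rw [Real.norm_eq_abs, abs_mul, abs_of_nonneg hpy, abs_div,
    abs_of_nonneg (by positivity : (0:ℝ) ≤ (1 + E) ^ 3)]
  have habs : |8 * y ^ 3 * E * (1 - E)| = 8 * |y| ^ 3 * E * |1 - E| := by
    rw [abs_mul, abs_mul, abs_mul]
    rw [abs_of_nonneg (by norm_num : (0:ℝ) ≤ (8:ℝ)), abs_of_pos hE, abs_pow]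
  rw [habs]
  have h1 : |1 - E| ≤ 1 + E := abs_le.mpr ⟨by linarith, by linarith⟩
  have key : 8 * |y| ^ 3 * E * |1 - E| / (1 + E) ^ 3 ≤ 2 * |y| ^ 3 := by
    rw [div_le_iff₀ (by positivity)]
    have step1 : 8 * |y| ^ 3 * E * |1 - E| ≤ 8 * |y| ^ 3 * E * (1 + E) := by
      apply mul_le_mul_of_nonneg_left h1
      positivity
    have step2 : 8 * |y| ^ 3 * E * (1 + E) ≤ 2 * |y| ^ 3 * (1 + E) ^ 3 := by
      nlinarith [mul_nonneg (mul_nonneg hy3 hEn.le) (sq_nonneg (1 - E))]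
    linarith
  calc 8 * |y| ^ 3 * E * |1 - E| / (1 + E) ^ 3 * py
      ≤ 2 * |y| ^ 3 * py := mul_le_mul_of_nonneg_right key hpy
    _ = 2 * (|y| ^ 3 * py) := by ring

/-- the unsupervised population EM map `M₀` of the symmetric
two-component Gaussian mixture is twice differentiable on `(0, ∞)` with the
stated nonpositive second derivative; in particular it is concave on `(0, ∞)`. -/
theorem symmetric_gaussian_mixture_em_map_second_derivative_and_concave
    (θstar : ℝ) (hθstar : 0 < θstar)
    (p : ℝ → ℝ)
    (hp : p = fun y => (1 / (2 * Real.sqrt (2 * Real.pi))) *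
      (Real.exp (-(y - θstar) ^ 2 / 2) + Real.exp (-(y + θstar) ^ 2 / 2)))
    (q : ℝ → ℝ → ℝ)
    (hq : q = fun θ y => 1 / (1 + Real.exp (2 * y * θ)))
    (M0 : ℝ → ℝ)
    (hM0 : M0 = fun θ => ∫ y : ℝ, (1 - 2 * q θ y) * y * p y)
    (D2 : ℝ → ℝ)
    (hD2 : D2 = fun θ => -8 * ∫ y : ℝ,
      y ^ 3 * (Real.exp (y * θ) - Real.exp (-(y * θ))) /
        (Real.exp (-(y * θ)) + Real.exp (y * θ)) ^ 3 * p y) :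
    (∀ θ : ℝ, 0 < θ → HasDerivAt (deriv M0) (D2 θ) θ ∧ D2 θ ≤ 0) ∧
    ConcaveOn ℝ (Set.Ioi 0) M0 := by
  -- basic facts about p
  have hp_cont : Continuous p := by
    rw [hp]
    fun_prop
  have hp_nonneg : ∀ y, 0 ≤ p y := by
    intro y; rw [hp]; positivity
  have hint : ∀ n : ℕ, Integrable fun y : ℝ => |y| ^ n * p y := by
    intro n
    have h1 := (int_pow_gauss n θstar).abs
    have h2 := (int_pow_gauss n (-θstar)).abs
    have he : (fun y : ℝ => |y| ^ n * p y)
        = fun y : ℝ => (1 / (2 * Real.sqrt (2 * Real.pi))) *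
            (|y ^ n * Real.exp (-(y - θstar) ^ 2 / 2)|
              + |y ^ n * Real.exp (-(y - -θstar) ^ 2 / 2)|) := by
      funext y
      rw [hp]
      rw [abs_mul, abs_mul, abs_of_pos (Real.exp_pos _), abs_of_pos (Real.exp_pos _), abs_pow]
      have : -(y - -θstar) ^ 2 = -(y + θstar) ^ 2 := by ring
      rw [this]
      ring
    rw [he]
    exact (h1.add h2).const_mul _
  -- the maps
  have hM0' : M0 = fun θ => ∫ y : ℝ, (1 - 2 * (1 / (1 + Real.exp (2 * y * θ)))) * y * p y := by
    simp only [hM0, hq]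
  -- first derivative
  have hA : ∀ θ₀ : ℝ, HasDerivAt M0
      (∫ y : ℝ, 4 * y ^ 2 * Real.exp (2 * y * θ₀) / (1 + Real.exp (2 * y * θ₀)) ^ 2 * p y) θ₀ := by
    intro θ₀
    rw [hM0']
    have hcontF : ∀ θ : ℝ, Continuous fun y : ℝ =>
        (1 - 2 * (1 / (1 + Real.exp (2 * y * θ)))) * y * p y := by
      intro θ
      have hexp : Continuous fun y : ℝ => Real.exp (2 * y * θ) :=
        Real.continuous_exp.comp ((continuous_const.mul continuous_id).mul continuous_const)
      exact ((continuous_const.sub (continuous_const.mul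
        (continuous_const.div (continuous_const.add hexp) fun y => aux_hne y θ))).mul
          continuous_id).mul hp_cont
    have hcontG : Continuous fun y : ℝ =>
        4 * y ^ 2 * Real.exp (2 * y * θ₀) / (1 + Real.exp (2 * y * θ₀)) ^ 2 * p y := by
      have hexp : Continuous fun y : ℝ => Real.exp (2 * y * θ₀) :=
        Real.continuous_exp.comp ((continuous_const.mul continuous_id).mul continuous_const)
      exact (((continuous_const.mul (continuous_pow 2)).mul hexp).div
        ((continuous_const.add hexp).pow 2) fun y => pow_ne_zero 2 (aux_hne y θ₀)).mul hp_cont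
    have hFint : Integrable (fun y : ℝ =>
        (1 - 2 * (1 / (1 + Real.exp (2 * y * θ₀)))) * y * p y) := by
      refine (hint 1).mono' ((hcontF θ₀).aestronglyMeasurable) ?_
      exact Filter.Eventually.of_forall fun y => aux_normF_le (p y) y θ₀ (hp_nonneg y)
    have H := hasDerivAt_integral_of_dominated_loc_of_deriv_le
      (F := fun θ (y : ℝ) => (1 - 2 * (1 / (1 + Real.exp (2 * y * θ)))) * y * p y)
      (F' := fun θ (y : ℝ) =>
        4 * y ^ 2 * Real.exp (2 * y * θ) / (1 + Real.exp (2 * y * θ)) ^ 2 * p y)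
      (bound := fun y : ℝ => |y| ^ 2 * p y)
      (Metric.ball_mem_nhds θ₀ one_pos)
      (Filter.Eventually.of_forall fun θ => (hcontF θ).aestronglyMeasurable)
      hFint
      hcontG.aestronglyMeasurable
      (Filter.Eventually.of_forall fun y θ _ => aux_normG_le (p y) y θ (hp_nonneg y))
      (hint 2)
      (Filter.Eventually.of_forall fun y θ _ => aux_F_deriv (p y) y θ)
    exact H.2
  have hderivM0 : deriv M0 = fun θ =>
      ∫ y : ℝ, 4 * y ^ 2 * Real.exp (2 * y * θ) / (1 + Real.exp (2 * y * θ)) ^ 2 * p y :=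
    funext fun θ => (hA θ).deriv
  -- second derivative
  have hB : ∀ θ₀ : ℝ, HasDerivAt (deriv M0)
      (∫ y : ℝ, 8 * y ^ 3 * Real.exp (2 * y * θ₀) * (1 - Real.exp (2 * y * θ₀)) /
        (1 + Real.exp (2 * y * θ₀)) ^ 3 * p y) θ₀ := by
    intro θ₀
    rw [hderivM0]
    have hcontG : ∀ θ : ℝ, Continuous fun y : ℝ =>
        4 * y ^ 2 * Real.exp (2 * y * θ) / (1 + Real.exp (2 * y * θ)) ^ 2 * p y := by
      intro θ
      have hexp : Continuous fun y : ℝ => Real.exp (2 * y * θ) :=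
        Real.continuous_exp.comp ((continuous_const.mul continuous_id).mul continuous_const)
      exact (((continuous_const.mul (continuous_pow 2)).mul hexp).div
        ((continuous_const.add hexp).pow 2) fun y => pow_ne_zero 2 (aux_hne y θ)).mul hp_cont
    have hcontH : Continuous fun y : ℝ =>
        8 * y ^ 3 * Real.exp (2 * y * θ₀) * (1 - Real.exp (2 * y * θ₀)) /
          (1 + Real.exp (2 * y * θ₀)) ^ 3 * p y := by
      have hexp : Continuous fun y : ℝ => Real.exp (2 * y * θ₀) :=
        Real.continuous_exp.comp ((continuous_const.mul continuous_id).mul continuous_const)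
      exact ((((continuous_const.mul (continuous_pow 3)).mul hexp).mul
        (continuous_const.sub hexp)).div
        ((continuous_const.add hexp).pow 3) fun y => pow_ne_zero 3 (aux_hne y θ₀)).mul hp_cont
    have hGint : Integrable (fun y : ℝ =>
        4 * y ^ 2 * Real.exp (2 * y * θ₀) / (1 + Real.exp (2 * y * θ₀)) ^ 2 * p y) := by
      refine (hint 2).mono' ((hcontG θ₀).aestronglyMeasurable) ?_
      exact Filter.Eventually.of_forall fun y => aux_normG_le (p y) y θ₀ (hp_nonneg y)
    have H := hasDerivAt_integral_of_dominated_loc_of_deriv_le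
      (F := fun θ (y : ℝ) =>
        4 * y ^ 2 * Real.exp (2 * y * θ) / (1 + Real.exp (2 * y * θ)) ^ 2 * p y)
      (F' := fun θ (y : ℝ) =>
        8 * y ^ 3 * Real.exp (2 * y * θ) * (1 - Real.exp (2 * y * θ)) /
          (1 + Real.exp (2 * y * θ)) ^ 3 * p y)
      (bound := fun y : ℝ => 2 * (|y| ^ 3 * p y))
      (Metric.ball_mem_nhds θ₀ one_pos)
      (Filter.Eventually.of_forall fun θ => (hcontG θ).aestronglyMeasurable)
      hGint
      hcontH.aestronglyMeasurable
      (Filter.Eventually.of_forall fun y θ _ => aux_normH_le (p y) y θ (hp_nonneg y))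
      ((hint 3).const_mul 2)
      (Filter.Eventually.of_forall fun y θ _ => aux_G_deriv (p y) y θ)
    exact H.2
  -- identification of D2 with the inner-form second derivative
  have hD2eq : ∀ θ : ℝ, D2 θ =
      ∫ y : ℝ, 8 * y ^ 3 * Real.exp (2 * y * θ) * (1 - Real.exp (2 * y * θ)) /
        (1 + Real.exp (2 * y * θ)) ^ 3 * p y := by
    intro θ
    simp only [hD2]
    rw [show (-8 : ℝ) * ∫ y : ℝ,
        y ^ 3 * (Real.exp (y * θ) - Real.exp (-(y * θ))) /
          (Real.exp (-(y * θ)) + Real.exp (y * θ)) ^ 3 * p y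
        = ∫ y : ℝ, (-8 : ℝ) * (y ^ 3 * (Real.exp (y * θ) - Real.exp (-(y * θ))) /
          (Real.exp (-(y * θ)) + Real.exp (y * θ)) ^ 3 * p y) from
      (integral_const_mul _ _).symm]
    congr 1
    funext y
    have hE := Real.exp_pos (y * θ)
    rw [Real.exp_neg, show (2:ℝ) * y * θ = y * θ + y * θ by ring, Real.exp_add]
    field_simp
    ring
  -- sign of D2
  have hD2sign : ∀ θ : ℝ, 0 < θ → D2 θ ≤ 0 := by
    intro θ hθ
    simp only [hD2]
    have hnonneg : 0 ≤ ∫ y : ℝ,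
        y ^ 3 * (Real.exp (y * θ) - Real.exp (-(y * θ))) /
          (Real.exp (-(y * θ)) + Real.exp (y * θ)) ^ 3 * p y := by
      refine integral_nonneg fun y => ?_
      have hden : (0:ℝ) < (Real.exp (-(y * θ)) + Real.exp (y * θ)) ^ 3 := by positivity
      have hnum : 0 ≤ y ^ 3 * (Real.exp (y * θ) - Real.exp (-(y * θ))) := by
        rcases le_or_gt 0 y with hy | hy
        · have h1 : Real.exp (-(y * θ)) ≤ Real.exp (y * θ) :=
            Real.exp_le_exp.mpr (by nlinarith)
          exact mul_nonneg (by positivity) (by linarith)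
        · have h1 : Real.exp (y * θ) ≤ Real.exp (-(y * θ)) :=
            Real.exp_le_exp.mpr (by nlinarith)
          have h3 : y ^ 3 ≤ 0 := by nlinarith [sq_nonneg y]
          nlinarith [h3, h1]
      exact mul_nonneg (div_nonneg hnum hden.le) (hp_nonneg y)
    linarith
  constructor
  · intro θ hθ
    refine ⟨?_, hD2sign θ hθ⟩
    rw [hD2eq θ]
    exact hB θ
  · refine concaveOn_of_deriv2_nonpos (convex_Ioi 0)
      (fun θ _ => ((hA θ).differentiableAt.continuousAt).continuousWithinAt) ?_ ?_ ?_
    · rw [interior_Ioi]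
      exact fun θ _ => (hA θ).differentiableAt.differentiableWithinAt
    · rw [interior_Ioi]
      exact fun θ _ => (hB θ).differentiableAt.differentiableWithinAt
    · rw [interior_Ioi]
      intro θ hθ
      have h2 : deriv (deriv M0) θ =
          ∫ y : ℝ, 8 * y ^ 3 * Real.exp (2 * y * θ) * (1 - Real.exp (2 * y * θ)) /
            (1 + Real.exp (2 * y * θ)) ^ 3 * p y := (hB θ).deriv
      have : deriv^[2] M0 θ = deriv (deriv M0) θ := by
        simp [Function.iterate_succ, Function.iterate_one, Function.comp]
      rw [this, h2, ← hD2eq θ]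
      exact hD2sign θ hθ
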